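/- Let (Ω, P) be a probability space, N ≥ 2, u† : Fin N → ℝ with Σᵢ u†(i) = 0, and σ ≥ 0. For each ordered pair (a,b) with a ≠ b let ε_{a,b} : Ω → ℝ be a square-integrable random variable with E[ε_{a,b}] = 0 and Var[ε_{a,b}] = σ², and assume Cov[ε_{a,b}, ε_{c,d}] = 0 for any two distinct ordered pairs (a,b) ≠ (c,d). Define ρ_{a,b}(ω) = u†(a) − u†(b) + ε_{a,b}(ω) and U(a)(ω) = (1/N)·Σ_{b ≠ a} ρ_{a,b}(ω). Then for all i ≠ j and every δ > 0, P({ω : |U(i)(ω) − U(j)(ω) − (u†(i) − u†(j))| ≥ δ}) ≤ 2·(N−1)·σ²/(N²·δ²); in particular this bound is at most 2σ²/(N·δ²), so the potential method is a consistent estimator of the preference function as N grows. -/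

import Mathlib

open Finset MeasureTheory ProbabilityTheory

private lemma mul_integrable_of_memℒp_two {Ω : Type*} [MeasurableSpace Ω] {μ : Measure Ω}
    [IsProbabilityMeasure μ] {g h : Ω → ℝ} (hg : MemLp g 2 μ) (hh : MemLp h 2 μ) :
    Integrable (fun ω => g ω * h ω) μ := by
  have hpqr : (1 : ENNReal) / 1 = 1 / 2 + 1 / 2 := by
    rw [ENNReal.div_add_div_same, div_one, one_add_one_eq_two]
    exact (ENNReal.div_self two_ne_zero ENNReal.ofNat_ne_top).symm
  have := hh.smul (φ := g) hg (r := 1)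
  exact memLp_one_iff_integrable.mp this

/-- Chebyshev-type consistency bound for the potential-method preference
estimator: the deviation probability is bounded by `2(N-1)σ²/(N²δ²)`, and in
particular by `2σ²/(Nδ²)`. -/
theorem potential_method_preference_consistency
    {Ω : Type*} [MeasurableSpace Ω] (μ : Measure Ω) [IsProbabilityMeasure μ]
    (N : ℕ) (hN : 2 ≤ N)
    (udag : Fin N → ℝ) (hu : ∑ k, udag k = 0)
    (σ : ℝ) (hσ : 0 ≤ σ)
    (ε : Fin N → Fin N → Ω → ℝ)
    (hL2 : ∀ a b, a ≠ b → MemLp (ε a b) 2 μ)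
    (hmean : ∀ a b, a ≠ b → ∫ ω, ε a b ω ∂μ = 0)
    (hvar : ∀ a b, a ≠ b → variance (ε a b) μ = σ ^ 2)
    (hcov : ∀ a b c d, a ≠ b → c ≠ d → (a, b) ≠ (c, d) →
      (∫ ω, ε a b ω * ε c d ω ∂μ) -
        (∫ ω, ε a b ω ∂μ) * (∫ ω, ε c d ω ∂μ) = 0)
    (ρ : Fin N → Fin N → Ω → ℝ)
    (hρ : ∀ a b, a ≠ b → ∀ ω, ρ a b ω = udag a - udag b + ε a b ω)
    (U : Fin N → Ω → ℝ)
    (hU : ∀ a ω, U a ω = (1 / (N : ℝ)) * ∑ b ∈ univ \ {a}, ρ a b ω) :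
    ∀ i j : Fin N, i ≠ j → ∀ δ : ℝ, 0 < δ →
      μ {ω | δ ≤ |U i ω - U j ω - (udag i - udag j)|} ≤
        ENNReal.ofReal (2 * ((N : ℝ) - 1) * σ ^ 2 / ((N : ℝ) ^ 2 * δ ^ 2)) ∧
      μ {ω | δ ≤ |U i ω - U j ω - (udag i - udag j)|} ≤
        ENNReal.ofReal (2 * σ ^ 2 / ((N : ℝ) * δ ^ 2)) := by
  intro i j hij δ hδ
  classical
  have hN0 : (0 : ℝ) < (N : ℝ) := by exact_mod_cast Nat.lt_of_lt_of_le (by norm_num) hN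
  have hNne : (N : ℝ) ≠ 0 := hN0.ne'
  have hmem : ∀ (a b : Fin N), b ∈ univ \ {a} → a ≠ b := by
    intro a b hb
    simp only [mem_sdiff, mem_univ, mem_singleton, true_and] at hb
    exact fun h => hb h.symm
  -- the deviation as a normalized sum of noises
  set A : Ω → ℝ := fun ω => ∑ b ∈ univ \ {i}, ε i b ω with hA_def
  set B : Ω → ℝ := fun ω => ∑ b ∈ univ \ {j}, ε j b ω with hB_def
  set f : Ω → ℝ := fun ω => (1 / (N : ℝ)) * (A ω - B ω) with hf_def
  have hsum_udag : ∀ a : Fin N, ∑ b ∈ univ \ {a}, udag b = - udag a := by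
    intro a
    have : ∑ b ∈ univ \ {a}, udag b = (∑ b, udag b) - ∑ b ∈ {a}, udag b :=
      Finset.sum_sdiff_eq_sub (Finset.subset_univ _)
    simpa [hu] using this
  have hcard : ∀ a : Fin N, (univ \ {a} : Finset (Fin N)).card = N - 1 := by
    intro a
    rw [Finset.card_sdiff_of_subset (Finset.subset_univ _)]
    simp
  have hUa : ∀ (a : Fin N) ω, U a ω = udag a + (1 / (N : ℝ)) * ∑ b ∈ univ \ {a}, ε a b ω := by
    intro a ω
    rw [hU]
    have h1 : ∑ b ∈ univ \ {a}, ρ a b ω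
        = ∑ b ∈ univ \ {a}, (udag a - udag b + ε a b ω) :=
      Finset.sum_congr rfl fun b hb => hρ a b (hmem a b hb) ω
    have h2 : ∑ b ∈ univ \ {a}, (udag a - udag b + ε a b ω)
        = (univ \ {a} : Finset (Fin N)).card • udag a - (∑ b ∈ univ \ {a}, udag b)
            + ∑ b ∈ univ \ {a}, ε a b ω := by
      rw [Finset.sum_add_distrib, Finset.sum_sub_distrib, Finset.sum_const]
    have hcast : ((N - 1 : ℕ) : ℝ) = (N : ℝ) - 1 := by
      have : 1 ≤ N := le_trans (by norm_num) hN
      push_cast [this]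
      ring
    rw [h1, h2, hsum_udag a, hcard a, nsmul_eq_mul, hcast]
    field_simp
    ring
  have hdev : ∀ ω, U i ω - U j ω - (udag i - udag j) = f ω := by
    intro ω
    rw [hUa i ω, hUa j ω, hf_def]
    simp only [hA_def, hB_def]
    ring
  -- integrability facts
  have hεint : ∀ a b, a ≠ b → Integrable (ε a b) μ := fun a b h =>
    (hL2 a b h).integrable one_le_two
  have hA2 : MemLp A 2 μ := by
    rw [hA_def]
    exact memLp_finset_sum _ fun b hb => hL2 i b (hmem i b hb)
  have hB2 : MemLp B 2 μ := by
    rw [hB_def]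
    exact memLp_finset_sum _ fun b hb => hL2 j b (hmem j b hb)
  have hf2 : MemLp f 2 μ := by
    rw [hf_def]
    exact (hA2.sub hB2).const_mul _
  -- mean of f is zero
  have hAmean : ∫ ω, A ω ∂μ = 0 := by
    rw [hA_def]
    rw [integral_finset_sum _ fun b hb => hεint i b (hmem i b hb)]
    exact Finset.sum_eq_zero fun b hb => hmean i b (hmem i b hb)
  have hBmean : ∫ ω, B ω ∂μ = 0 := by
    rw [hB_def]
    rw [integral_finset_sum _ fun b hb => hεint j b (hmem j b hb)]
    exact Finset.sum_eq_zero fun b hb => hmean j b (hmem j b hb)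
  have hfmean : ∫ ω, f ω ∂μ = 0 := by
    rw [hf_def]
    rw [integral_const_mul, integral_sub (hA2.integrable one_le_two) (hB2.integrable one_le_two),
      hAmean, hBmean]
    ring
  -- the key second-moment computation
  have key : ∀ a b c d, a ≠ b → c ≠ d →
      ∫ ω, ε a b ω * ε c d ω ∂μ = if (a, b) = (c, d) then σ ^ 2 else 0 := by
    intro a b c d hab hcd
    by_cases h : (a, b) = (c, d)
    · have h1 : a = c := congrArg Prod.fst h
      have h2 : b = d := congrArg Prod.snd h
      subst h1; subst h2
      rw [if_pos rfl]
      have hv := variance_eq_sub (hL2 a b hab)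
      rw [hvar a b hab, hmean a b hab] at hv
      have : (∫ ω, (ε a b ^ 2) ω ∂μ) = ∫ ω, ε a b ω * ε a b ω ∂μ := by
        congr 1; funext ω; simp [sq]
      rw [this] at hv
      linarith
    · rw [if_neg h]
      have := hcov a b c d hab hcd h
      rw [hmean a b hab, hmean c d hcd] at this
      linarith
  -- integrals of products of the sums
  have hprod : ∀ (p q : Fin N) (s t : Finset (Fin N)),
      (∀ b ∈ s, p ≠ b) → (∀ d ∈ t, q ≠ d) →
      ∫ ω, (∑ b ∈ s, ε p b ω) * (∑ d ∈ t, ε q d ω) ∂μ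
        = ∑ b ∈ s, ∑ d ∈ t, (if (p, b) = (q, d) then σ ^ 2 else 0) := by
    intro p q s t hs ht
    have hexp : ∀ ω, (∑ b ∈ s, ε p b ω) * (∑ d ∈ t, ε q d ω)
        = ∑ b ∈ s, ∑ d ∈ t, ε p b ω * ε q d ω := fun ω => Finset.sum_mul_sum _ _ _ _
    rw [show (fun ω => (∑ b ∈ s, ε p b ω) * (∑ d ∈ t, ε q d ω))
        = fun ω => ∑ b ∈ s, ∑ d ∈ t, ε p b ω * ε q d ω from funext hexp]
    rw [integral_finset_sum _ fun b hb => integrable_finset_sum _ fun d hd =>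
      mul_integrable_of_memℒp_two (hL2 p b (hs b hb)) (hL2 q d (ht d hd))]
    refine Finset.sum_congr rfl fun b hb => ?_
    rw [integral_finset_sum _ fun d hd =>
      mul_integrable_of_memℒp_two (hL2 p b (hs b hb)) (hL2 q d (ht d hd))]
    exact Finset.sum_congr rfl fun d hd => key p b q d (hs b hb) (ht d hd)
  have hdiag : ∀ p : Fin N,
      ∑ b ∈ univ \ {p}, ∑ d ∈ univ \ {p}, (if (p, b) = (p, d) then σ ^ 2 else 0)
        = ((N : ℝ) - 1) * σ ^ 2 := by
    intro p
    have : ∀ b ∈ univ \ {p},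
        ∑ d ∈ univ \ {p}, (if (p, b) = (p, d) then σ ^ 2 else 0) = σ ^ 2 := by
      intro b hb
      have : ∀ d, ((p, b) = (p, d)) = (b = d) := by
        intro d; simp [Prod.ext_iff]
      simp_rw [this]
      rw [Finset.sum_ite_eq (univ \ {p}) b (fun _ => σ ^ 2), if_pos hb]
    rw [Finset.sum_congr rfl this, Finset.sum_const, hcard p, nsmul_eq_mul]
    have h1 : 1 ≤ N := le_trans (by norm_num) hN
    push_cast [h1]
    ring
  have hoff : ∀ (p q : Fin N), p ≠ q → ∀ (s t : Finset (Fin N)),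
      ∑ b ∈ s, ∑ d ∈ t, (if (p, b) = (q, d) then σ ^ 2 else 0) = 0 := by
    intro p q hpq s t
    refine Finset.sum_eq_zero fun b _ => Finset.sum_eq_zero fun d _ => ?_
    rw [if_neg]
    intro h
    exact hpq (congrArg Prod.fst h)
  have hIAA : ∫ ω, A ω * A ω ∂μ = ((N : ℝ) - 1) * σ ^ 2 := by
    rw [hA_def]
    rw [hprod i i _ _ (fun b hb => hmem i b hb) (fun d hd => hmem i d hd), hdiag i]
  have hIBB : ∫ ω, B ω * B ω ∂μ = ((N : ℝ) - 1) * σ ^ 2 := by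
    rw [hB_def]
    rw [hprod j j _ _ (fun b hb => hmem j b hb) (fun d hd => hmem j d hd), hdiag j]
  have hIAB : ∫ ω, A ω * B ω ∂μ = 0 := by
    rw [hA_def, hB_def]
    rw [hprod i j _ _ (fun b hb => hmem i b hb) (fun d hd => hmem j d hd), hoff i j hij]
  have hIBA : ∫ ω, B ω * A ω ∂μ = 0 := by
    rw [hB_def, hA_def]
    rw [hprod j i _ _ (fun b hb => hmem j b hb) (fun d hd => hmem i d hd),
      hoff j i (Ne.symm hij)]
  -- the variance of f
  have hintAA : Integrable (fun ω => A ω * A ω) μ := mul_integrable_of_memℒp_two hA2 hA2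
  have hintAB : Integrable (fun ω => A ω * B ω) μ := mul_integrable_of_memℒp_two hA2 hB2
  have hintBA : Integrable (fun ω => B ω * A ω) μ := mul_integrable_of_memℒp_two hB2 hA2
  have hintBB : Integrable (fun ω => B ω * B ω) μ := mul_integrable_of_memℒp_two hB2 hB2
  have hvarf : variance f μ = 2 * ((N : ℝ) - 1) * σ ^ 2 / (N : ℝ) ^ 2 := by
    rw [variance_eq_sub hf2]
    have hfm : (∫ ω, (f ^ 2) ω ∂μ) = (1 / (N : ℝ)) ^ 2 *
        ((∫ ω, A ω * A ω ∂μ) - (∫ ω, A ω * B ω ∂μ)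
          - (∫ ω, B ω * A ω ∂μ) + (∫ ω, B ω * B ω ∂μ)) := by
      have hpt : ∀ ω, (f ^ 2) ω = (1 / (N : ℝ)) ^ 2 *
          (A ω * A ω - A ω * B ω - B ω * A ω + B ω * B ω) := by
        intro ω
        simp only [Pi.pow_apply, hf_def]
        ring
      rw [show (fun ω => (f ^ 2) ω) = fun ω => (1 / (N : ℝ)) ^ 2 *
          (A ω * A ω - A ω * B ω - B ω * A ω + B ω * B ω) from funext hpt]
      have h1 : Integrable (fun a => A a * A a - A a * B a) μ := hintAA.sub hintAB
      have h2 : Integrable (fun a => A a * A a - A a * B a - B a * A a) μ := h1.sub hintBA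
      rw [integral_const_mul,
        integral_add (f := fun a => A a * A a - A a * B a - B a * A a)
          (g := fun a => B a * B a) h2 hintBB,
        integral_sub (f := fun a => A a * A a - A a * B a)
          (g := fun a => B a * A a) h1 hintBA,
        integral_sub (f := fun a => A a * A a) (g := fun a => A a * B a) hintAA hintAB]
    rw [hfm, hIAA, hIAB, hIBA, hIBB]
    have hfmean' : (∫ ω, f ω ∂μ) = 0 := hfmean
    rw [hfmean']
    field_simp
    ring
  -- Chebyshev
  have hcheb := meas_ge_le_variance_div_sq (μ := μ) hf2 hδ
  have hset : {ω | δ ≤ |U i ω - U j ω - (udag i - udag j)|}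
      = {ω | δ ≤ |f ω - ∫ x, f x ∂μ|} := by
    ext ω
    simp only [Set.mem_setOf_eq, hdev ω, hfmean, sub_zero]
  have hbound1 : μ {ω | δ ≤ |U i ω - U j ω - (udag i - udag j)|} ≤
      ENNReal.ofReal (2 * ((N : ℝ) - 1) * σ ^ 2 / ((N : ℝ) ^ 2 * δ ^ 2)) := by
    rw [hset]
    refine le_trans hcheb (le_of_eq ?_)
    rw [hvarf, div_div]
  refine ⟨hbound1, le_trans hbound1 (ENNReal.ofReal_le_ofReal ?_)⟩
  rw [div_le_div_iff₀ (by positivity) (by positivity)]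
  have hN1 : (1 : ℝ) ≤ (N : ℝ) := by exact_mod_cast le_trans (by norm_num) hN
  nlinarith [sq_nonneg σ, sq_nonneg δ, mul_nonneg (sq_nonneg σ) (sq_nonneg δ), hN0]
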